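/- If (𝒴, 𝒦) is a supercharacter theory of a finite group G and X ∈ 𝒴, then X is good, i.e., X is a member of the filtration ℱ({X}). -/

import Mathlib

open scoped Classical

/-- The set of irreducible characters of `G` over `ℂ`. -/
noncomputable def Irr (G : Type) [Group G] [Fintype G] : Set (G → ℂ) :=
  {χ | ∃ V : FDRep ℂ G, CategoryTheory.Simple V ∧ χ = V.character}

/-- The trivial character. -/
noncomputable def triv (G : Type) [Group G] [Fintype G] : G → ℂ := fun _ => 1

/-- The Wedderburn sum `σ_X = ∑_{χ ∈ X} χ(1)·χ`. -/
noncomputable def wsum {G : Type} [Group G] [Fintype G] (X : Set (G → ℂ)) : G → ℂ :=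
  fun g => ∑ᶠ χ ∈ X, χ 1 * χ g

/-- `P` is a partition of the set `S`. -/
def IsPartitionOf {α : Type*} (S : Set α) (P : Set (Set α)) : Prop :=
  (∀ p ∈ P, p.Nonempty ∧ p ⊆ S) ∧ ∀ a ∈ S, ∃! p, p ∈ P ∧ a ∈ p

/-- A partial partition of `Irr G`: nonempty pairwise disjoint subsets of `Irr G`. -/
def IsPartialPartition (G : Type) [Group G] [Fintype G] (P : Set (Set (G → ℂ))) : Prop :=
  (∀ p ∈ P, p.Nonempty ∧ p ⊆ Irr G) ∧ ∀ p ∈ P, ∀ q ∈ P, p ≠ q → p ∩ q = ∅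

/-- A supercharacter theory of `G` in the sense of Diaconis–Isaacs: `Y` partitions
`Irr G`, `K` partitions `G` with `{1} ∈ K`, `|Y| = |K|`, and every Wedderburn sum
`σ_X`, `X ∈ Y`, is constant on every member of `K`. -/
def IsSCT (G : Type) [Group G] [Fintype G] (Y : Set (Set (G → ℂ))) (K : Set (Set G)) : Prop :=
  IsPartitionOf (Irr G) Y ∧ IsPartitionOf (Set.univ : Set G) K ∧
    ({(1 : G)} : Set G) ∈ K ∧ Y.ncard = K.ncard ∧
    ∀ X ∈ Y, ∀ k ∈ K, ∀ g ∈ k, ∀ h ∈ k, wsum X g = wsum X h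

/-- The coefficient of `χ(1)·χ` in the expansion of the class function `a` in the
orthogonal basis `{φ(1)·φ : φ ∈ Irr G}` of `cf(G)`. -/
noncomputable def coeff {G : Type} [Group G] [Fintype G] (χ a : G → ℂ) : ℂ :=
  (∑ g : G, starRingEnd ℂ (χ g) * a g) / ((Fintype.card G : ℂ) * χ 1)

/-- The (non-unital) subalgebra of `cf(G)` generated by the Wedderburn sums of `𝒳`. -/
noncomputable def wAlg (G : Type) [Group G] [Fintype G] (𝒳 : Set (Set (G → ℂ))) :
    NonUnitalSubalgebra ℂ (G → ℂ) :=
  NonUnitalAlgebra.adjoin ℂ {s | ∃ X ∈ 𝒳, s = wsum X}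

/-- The equivalence relation defining the filtration `ℱ(𝒳)`: `χ ∼ ψ` iff the
coefficients of `χ(1)χ` and `ψ(1)ψ` agree in every element of the algebra `𝒜`. -/
def frel (G : Type) [Group G] [Fintype G] (𝒳 : Set (Set (G → ℂ))) (χ ψ : G → ℂ) : Prop :=
  ∀ a ∈ wAlg G 𝒳, coeff χ a = coeff ψ a

/-- The filtration `ℱ(𝒳)`: the partition of `Irr G` into equivalence classes of `frel`. -/
def Filt (G : Type) [Group G] [Fintype G] (𝒳 : Set (Set (G → ℂ))) : Set (Set (G → ℂ)) :=
  {C | ∃ χ ∈ Irr G, C = {ψ ∈ Irr G | frel G 𝒳 χ ψ}}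

section TraceConj
variable {V : Type*} [AddCommGroup V] [Module ℂ V] [FiniteDimensional ℂ V]

lemma conj_of_pow_eq_one {μ : ℂ} {k : ℕ} (hk : 0 < k) (h : μ ^ k = 1) :
    starRingEnd ℂ μ = μ ^ (k - 1) := by
  have hns : (Complex.normSq μ : ℝ) ^ k = 1 := by
    have := congrArg Complex.normSq h
    rwa [map_pow, map_one] at this
  have hnn : (0:ℝ) ≤ Complex.normSq μ := Complex.normSq_nonneg μ
  have h1 : Complex.normSq μ = 1 := by
    rcases lt_trichotomy (Complex.normSq μ) 1 with hlt | heq | hgt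
    · have := pow_lt_one₀ hnn hlt hk.ne'
      rw [hns] at this; exact absurd this (lt_irrefl 1)
    · exact heq
    · have := one_lt_pow₀ hgt hk.ne'
      rw [hns] at this; exact absurd this (lt_irrefl 1)
  have hmu : μ ≠ 0 := by
    intro h0; rw [h0, zero_pow hk.ne'] at h; exact zero_ne_one h
  have h2 : μ * starRingEnd ℂ μ = 1 := by
    rw [Complex.mul_conj, h1]; norm_num
  have h3 : μ * μ ^ (k - 1) = 1 := by
    rw [← pow_succ', Nat.sub_add_cancel hk, h]
  exact mul_left_cancel₀ hmu (h2.trans h3.symm)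

lemma eigen_pow_apply {f : Module.End ℂ V} {μ : ℂ} {x : V} (hx : f x = μ • x) (m : ℕ) :
    (f ^ m) x = μ ^ m • x := by
  induction m with
  | zero => simp
  | succ n ih =>
    rw [pow_succ, Module.End.mul_apply, hx, map_smul, ih, smul_smul, pow_succ, mul_comm]

lemma trace_pow_pred_eq_conj_trace (f : Module.End ℂ V) (k : ℕ) (hk : 0 < k)
    (hf : f ^ k = 1) :
    LinearMap.trace ℂ V (f ^ (k - 1)) = starRingEnd ℂ (LinearMap.trace ℂ V f) := by
  classical
  have hk' : (k : ℂ) ≠ 0 := Nat.cast_ne_zero.mpr hk.ne'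
  have hsq : Squarefree ((Polynomial.X : Polynomial ℂ) ^ k - Polynomial.C 1) :=
    (Polynomial.separable_X_pow_sub_C 1 hk' one_ne_zero).squarefree
  have haev : Polynomial.aeval f ((Polynomial.X : Polynomial ℂ) ^ k - Polynomial.C 1) = 0 := by
    simp [hf]
  have hss : f.IsSemisimple := Module.End.isSemisimple_of_squarefree_aeval_eq_zero hsq haev
  have hfs := hss.isFinitelySemisimple
  set N : ℂ → Submodule ℂ V := fun μ => f.eigenspace μ with hN
  have hindep : iSupIndep N := f.eigenspaces_iSupIndep
  have htop : iSup N = ⊤ := by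
    have h2 := f.iSup_maxGenEigenspace_eq_top
    have : ∀ μ, f.maxGenEigenspace μ = N μ := fun μ => hfs.maxGenEigenspace_eq_eigenspace μ
    simpa [this] using h2
  have hInt : DirectSum.IsInternal N :=
    (DirectSum.isInternal_submodule_iff_iSupIndep_and_iSup_eq_top N).mpr ⟨hindep, htop⟩
  -- eigenvalues are k-th roots of unity
  have hroot : ∀ μ : ℂ, N μ ≠ ⊥ → μ ^ k = 1 := by
    intro μ hμ
    obtain ⟨v, hv, hv0⟩ := Submodule.exists_mem_ne_zero_of_ne_bot hμ
    have hev : f.HasEigenvector μ v := ⟨hv, hv0⟩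
    have := hev.pow_apply k
    rw [hf] at this
    have h2 : (μ ^ k - 1) • v = 0 := by
      rw [sub_smul, one_smul, ← this]; simp
    rcases smul_eq_zero.mp h2 with h | h
    · exact sub_eq_zero.mp h
    · exact absurd h hv0
  -- finiteness of the support
  have hpne : ((Polynomial.X : Polynomial ℂ) ^ k - Polynomial.C 1) ≠ 0 :=
    Polynomial.X_pow_sub_C_ne_zero hk 1
  have hNfin : {μ : ℂ | N μ ≠ ⊥}.Finite := by
    apply (Polynomial.finite_setOf_isRoot hpne).subset
    intro μ hμ
    have := hroot μ hμ
    simp [Polynomial.IsRoot, this]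
  have hmap : ∀ (m : ℕ) (μ : ℂ), Set.MapsTo (f ^ m) (N μ) (N μ) := by
    intro m μ x hx
    have hx' : f x = μ • x := Module.End.mem_eigenspace_iff.mp hx
    show (f ^ m) x ∈ N μ
    rw [eigen_pow_apply hx' m]
    exact Submodule.smul_mem _ _ (by exact hx)
  have key : ∀ (m : ℕ), LinearMap.trace ℂ V (f ^ m) =
      ∑ μ ∈ hNfin.toFinset, μ ^ m * (Module.finrank ℂ (N μ) : ℂ) := by
    intro m
    rw [LinearMap.trace_eq_sum_trace_restrict' hInt hNfin (hmap m)]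
    refine Finset.sum_congr rfl fun μ _ => ?_
    have hres : (f ^ m).restrict (hmap m μ) = (μ ^ m) • LinearMap.id := by
      ext ⟨x, hx⟩
      have hx' : f x = μ • x := Module.End.mem_eigenspace_iff.mp hx
      have h3 : (f ^ m) x = μ ^ m • x := eigen_pow_apply hx' m
      exact h3
    rw [hres, map_smul, LinearMap.trace_id]
    simp [mul_comm]
  have h1 := key (k - 1)
  have h2 := key 1
  rw [pow_one] at h2
  rw [h1, h2, map_sum]
  refine Finset.sum_congr rfl fun μ hμ => ?_
  have hμ' : N μ ≠ ⊥ := by simpa using (Set.Finite.mem_toFinset hNfin).mp hμ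
  have hrt := hroot μ hμ'
  simp [map_pow, conj_of_pow_eq_one hk hrt, map_natCast]
end TraceConj

lemma FDRep_char_inv {G : Type} [Group G] [Fintype G] (V : FDRep ℂ G) (g : G) :
    V.character g⁻¹ = starRingEnd ℂ (V.character g) := by
  have hk : 0 < Fintype.card G := Fintype.card_pos
  have hgk : g ^ Fintype.card G = 1 := pow_card_eq_one
  have hinv : g⁻¹ = g ^ (Fintype.card G - 1) := by
    have h : g * g ^ (Fintype.card G - 1) = 1 := by
      rw [← pow_succ', Nat.sub_add_cancel hk, hgk]
    exact (inv_eq_of_mul_eq_one_right h)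
  have hf : (V.ρ g) ^ Fintype.card G = 1 := by rw [← map_pow, hgk, map_one]
  have : V.character g⁻¹ = LinearMap.trace ℂ V ((V.ρ g) ^ (Fintype.card G - 1)) := by
    rw [show V.character g⁻¹ = LinearMap.trace ℂ V (V.ρ g⁻¹) from rfl, hinv, map_pow]
  rw [this, trace_pow_pred_eq_conj_trace (V.ρ g) (Fintype.card G) hk hf]
  rfl

section IrrFacts
variable {G : Type} [Group G] [Fintype G]

lemma irr_orth {χ ψ : G → ℂ} (hχ : χ ∈ Irr G) (hψ : ψ ∈ Irr G) :
    ∑ g : G, starRingEnd ℂ (χ g) * ψ g = if χ = ψ then (Fintype.card G : ℂ) else 0 := by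
  obtain ⟨V, hV, hχc⟩ := hχ
  obtain ⟨W, hW, hψc⟩ := hψ
  letI : Invertible (Fintype.card G : ℂ) :=
    invertibleOfNonzero (Nat.cast_ne_zero.mpr Fintype.card_pos.ne')
  have main : ∀ (A B : FDRep ℂ G), CategoryTheory.Simple A → CategoryTheory.Simple B →
      ∑ g : G, A.character g * B.character g⁻¹ =
        if Nonempty (A ≅ B) then (Fintype.card G : ℂ) else 0 := by
    intro A B hA hB
    haveI := hA; haveI := hB
    letI : Fintype ↥(GrpCat.of G) := ‹Fintype G›
    have h : ⅟(Fintype.card G : ℂ) • ∑ g : G, A.character g * B.character g⁻¹ =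
        if Nonempty (A ≅ B) then (1 : ℂ) else 0 :=
      by
        rw [smul_eq_mul, invOf_eq_inv, ← Nat.card_eq_fintype_card]
        exact_mod_cast FDRep.char_orthonormal A B
    have h2 := congrArg (fun z => (Fintype.card G : ℂ) * z) h
    simp only [smul_eq_mul, ← mul_assoc] at h2
    rw [mul_invOf_self, one_mul] at h2
    rw [h2]
    split <;> simp
  have hconj : ∀ g : G, starRingEnd ℂ (χ g) = χ g⁻¹ := by
    intro g; rw [hχc, ← FDRep_char_inv]
  have hre : ∑ g : G, starRingEnd ℂ (χ g) * ψ g = ∑ g : G, χ g * ψ g⁻¹ := by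
    simp_rw [hconj]
    exact (Fintype.sum_equiv (Equiv.inv G) (fun x => χ x * ψ x⁻¹)
      (fun x => χ x⁻¹ * ψ x) (fun x => by simp)).symm
  rw [hre]
  by_cases hcase : χ = ψ
  · have hWV : ψ = V.character := hcase ▸ hχc
    rw [if_pos hcase, hχc, hWV, main V V hV hV, if_pos ⟨CategoryTheory.Iso.refl V⟩]
  · rw [if_neg hcase, hχc, hψc, main V W hV hW, if_neg]
    rintro ⟨i⟩
    exact hcase ((hχc.trans (FDRep.char_iso i)).trans hψc.symm)

lemma irr_one_ne_zero {χ : G → ℂ} (hχ : χ ∈ Irr G) : χ 1 ≠ 0 := by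
  intro h0
  obtain ⟨V, hV, hχc⟩ := hχ
  have hfr : Module.finrank ℂ V = 0 := by
    have := hχc ▸ h0
    rw [FDRep.char_one] at this
    exact_mod_cast this
  have hsub : Subsingleton V := by
    rw [← Module.finrank_zero_iff (R := ℂ) (M := V)] at *
    exact hfr
  have hzero : ∀ g : G, χ g = 0 := by
    intro g
    rw [hχc]
    show LinearMap.trace ℂ V (V.ρ g) = 0
    rw [Subsingleton.elim (V.ρ g) 0, map_zero]
  have horth := irr_orth (⟨V, hV, hχc⟩ : _ ∈ Irr G) (⟨V, hV, hχc⟩ : _ ∈ Irr G)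
  rw [if_pos rfl] at horth
  simp only [hzero, mul_zero, Finset.sum_const_zero] at horth
  exact Nat.cast_ne_zero.mpr Fintype.card_pos.ne' horth.symm

end IrrFacts

section Aux
variable {G : Type} [Group G] [Fintype G]

/-- The linear functional `a ↦ ∑ g, conj (χ g) * a g`. -/
noncomputable def Lfun (χ : G → ℂ) : (G → ℂ) →ₗ[ℂ] ℂ where
  toFun a := ∑ g, starRingEnd ℂ (χ g) * a g
  map_add' a b := by simp [mul_add, Finset.sum_add_distrib]
  map_smul' c a := by
    simp only [Pi.smul_apply, smul_eq_mul, RingHom.id_apply, Finset.mul_sum]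
    exact Finset.sum_congr rfl fun g _ => by ring

lemma Lfun_apply (χ a : G → ℂ) : Lfun χ a = ∑ g, starRingEnd ℂ (χ g) * a g := rfl

lemma coeff_eq (χ a : G → ℂ) :
    coeff χ a = Lfun χ a / ((Fintype.card G : ℂ) * χ 1) := rfl

lemma Lfun_irr {χ ψ : G → ℂ} (hχ : χ ∈ Irr G) (hψ : ψ ∈ Irr G) :
    Lfun χ ψ = if χ = ψ then (Fintype.card G : ℂ) else 0 := irr_orth hχ hψ

lemma irr_linearIndependent : LinearIndependent ℂ ((↑) : Irr G → (G → ℂ)) := by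
  rw [linearIndependent_iff']
  intro t c hsum i hit
  have h := congrArg (Lfun (i : G → ℂ)) hsum
  rw [map_sum, map_zero] at h
  simp_rw [map_smul, smul_eq_mul] at h
  rw [Finset.sum_eq_single i] at h
  · have hLi : Lfun (i : G → ℂ) (i : G → ℂ) = (Fintype.card G : ℂ) := by
      rw [Lfun_irr i.2 i.2, if_pos rfl]
    rw [hLi] at h
    exact (mul_eq_zero.mp h).resolve_right (Nat.cast_ne_zero.mpr Fintype.card_pos.ne')
  · intro j hjt hji
    rw [Lfun_irr i.2 j.2, if_neg (Ne.symm (Subtype.coe_injective.ne hji)), mul_zero]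
  · intro hni; exact absurd hit hni

lemma irr_finite : (Irr G).Finite :=
  (irr_linearIndependent (G := G)).setFinite

lemma wsum_apply {Z : Set (G → ℂ)} (hZ : Z.Finite) (g : G) :
    wsum Z g = ∑ φ ∈ hZ.toFinset, φ 1 * φ g :=
  finsum_mem_eq_finite_toFinset_sum _ hZ

lemma Lfun_wsum {Z : Set (G → ℂ)} (hZ : Z ⊆ Irr G) {χ : G → ℂ} (hχ : χ ∈ Irr G) :
    Lfun χ (wsum Z) = if χ ∈ Z then (Fintype.card G : ℂ) * χ 1 else 0 := by
  have hZf : Z.Finite := irr_finite.subset hZ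
  rw [Lfun_apply]
  have h1 : ∀ g : G, starRingEnd ℂ (χ g) * wsum Z g
      = ∑ φ ∈ hZf.toFinset, φ 1 * (starRingEnd ℂ (χ g) * φ g) := by
    intro g
    rw [wsum_apply hZf, Finset.mul_sum]
    exact Finset.sum_congr rfl fun φ _ => by ring
  simp_rw [h1]
  rw [Finset.sum_comm]
  have h2 : ∀ φ ∈ hZf.toFinset, φ 1 * ∑ g, starRingEnd ℂ (χ g) * φ g
      = if χ = φ then (Fintype.card G : ℂ) * χ 1 else 0 := by
    intro φ hφ
    have hφZ : φ ∈ Z := hZf.mem_toFinset.mp hφ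
    rw [← Lfun_apply, Lfun_irr hχ (hZ hφZ)]
    by_cases h : χ = φ
    · subst h; rw [if_pos rfl, if_pos rfl]; ring
    · rw [if_neg h, if_neg h, mul_zero]
  simp_rw [← Finset.mul_sum]
  rw [Finset.sum_congr rfl h2]
  by_cases hmem : χ ∈ Z
  · rw [Finset.sum_ite_eq, if_pos (hZf.mem_toFinset.mpr hmem), if_pos hmem]
  · rw [if_neg hmem, Finset.sum_eq_zero]
    intro φ hφ
    rw [if_neg]
    intro h; subst h; exact hmem (hZf.mem_toFinset.mp hφ)

lemma coeff_wsum {Z : Set (G → ℂ)} (hZ : Z ⊆ Irr G) {χ : G → ℂ} (hχ : χ ∈ Irr G) :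
    coeff χ (wsum Z) = if χ ∈ Z then (1 : ℂ) else 0 := by
  have hden : (Fintype.card G : ℂ) * χ 1 ≠ 0 :=
    mul_ne_zero (Nat.cast_ne_zero.mpr Fintype.card_pos.ne') (irr_one_ne_zero hχ)
  rw [coeff_eq, Lfun_wsum hZ hχ]
  by_cases hmem : χ ∈ Z
  · rw [if_pos hmem, if_pos hmem, div_self hden]
  · rw [if_neg hmem, if_neg hmem, zero_div]

lemma coeff_zero' (χ : G → ℂ) : coeff χ (0 : G → ℂ) = 0 := by
  rw [coeff_eq, map_zero, zero_div]

lemma coeff_add' (χ a b : G → ℂ) : coeff χ (a + b) = coeff χ a + coeff χ b := by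
  rw [coeff_eq, coeff_eq, coeff_eq, map_add, add_div]

lemma coeff_smul' (χ : G → ℂ) (c : ℂ) (a : G → ℂ) :
    coeff χ (c • a) = c * coeff χ a := by
  rw [coeff_eq, coeff_eq, map_smul, smul_eq_mul, mul_div_assoc]

/-- The indicator function of a set, with values in `ℂ`. -/
noncomputable def indC (k : Set G) : G → ℂ := fun g => if g ∈ k then 1 else 0

lemma linIndep_of_sep {W : Type*} [AddCommGroup W] [Module ℂ W] {s : Set W}
    (h : ∀ v ∈ s, ∃ L : W →ₗ[ℂ] ℂ, L v ≠ 0 ∧ ∀ w ∈ s, w ≠ v → L w = 0) :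
    LinearIndependent ℂ ((↑) : s → W) := by
  rw [linearIndependent_iff']
  intro t c hsum i hit
  obtain ⟨L, hLv, hLw⟩ := h (i : W) i.2
  have hz := congrArg L hsum
  rw [map_sum, map_zero] at hz
  simp_rw [map_smul, smul_eq_mul] at hz
  rw [Finset.sum_eq_single i] at hz
  · exact (mul_eq_zero.mp hz).resolve_right hLv
  · intro j hjt hji
    rw [hLw (j : W) j.2 (Subtype.coe_injective.ne hji), mul_zero]
  · intro hni; exact absurd hit hni

end Aux

/-- if `(Y, K)` is a supercharacter theory of `G` and `X ∈ Y`, then `X`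
is good, i.e. `X` is a member of the filtration `ℱ({X})`. -/
theorem stmt11 (G : Type) [Group G] [Fintype G] (Y : Set (Set (G → ℂ))) (K : Set (Set G))
    (hsct : IsSCT G Y K) (X : Set (G → ℂ)) (hX : X ∈ Y) :
    X ∈ Filt G {X} := by
  classical
  obtain ⟨hY, hK, hK1, hcard, hconst⟩ := hsct
  have hIrrFin : (Irr G).Finite := irr_finite
  have hXne : X.Nonempty := (hY.1 X hX).1
  have hXsub : X ⊆ Irr G := (hY.1 X hX).2
  obtain ⟨χ₀, hχ₀X⟩ := hXne
  have hχ₀ : χ₀ ∈ Irr G := hXsub hχ₀X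
  have hYdisj : ∀ {Z Z' : Set (G → ℂ)}, Z ∈ Y → Z' ∈ Y →
      ∀ {φ}, φ ∈ Z → φ ∈ Z' → Z = Z' := by
    intro Z Z' hZ hZ' φ hφZ hφZ'
    obtain ⟨p, hp, hu⟩ := hY.2 φ ((hY.1 Z hZ).2 hφZ)
    rw [hu Z ⟨hZ, hφZ⟩, hu Z' ⟨hZ', hφZ'⟩]
  have hKuniq : ∀ g : G, ∃! k, k ∈ K ∧ g ∈ k := fun g => hK.2 g (Set.mem_univ g)
  set Sσ : Set (G → ℂ) := wsum '' Y with hSσ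
  set SInd : Set (G → ℂ) := indC '' K with hSInd
  have hYfin : Y.Finite := (hIrrFin.finite_subsets).subset (fun p hp => (hY.1 p hp).2)
  have hKfin : K.Finite := Set.toFinite K
  set VK : Submodule ℂ (G → ℂ) :=
    { carrier := {f | ∀ k ∈ K, ∀ g ∈ k, ∀ h ∈ k, f g = f h}
      add_mem' := fun hf hg k hk x hx y hy => by
        simp only [Pi.add_apply]
        rw [hf k hk x hx y hy, hg k hk x hx y hy]
      zero_mem' := fun k hk x hx y hy => rfl
      smul_mem' := fun c f hf k hk x hx y hy => by
        simp only [Pi.smul_apply]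
        rw [hf k hk x hx y hy] } with hVK
  have hmemVK : ∀ f : G → ℂ, f ∈ VK ↔ ∀ k ∈ K, ∀ g ∈ k, ∀ h ∈ k, f g = f h :=
    fun f => Iff.rfl
  have hσVK : ∀ Z ∈ Y, wsum Z ∈ VK := fun Z hZ k hk g hg h hh => hconst Z hZ k hk g hg h hh
  have hmulVK : ∀ f ∈ VK, ∀ g ∈ VK, f * g ∈ VK := by
    intro f hf g hg k hk x hx y hy
    simp only [Pi.mul_apply]
    rw [hf k hk x hx y hy, hg k hk x hx y hy]
  have hspanσ_VK : Submodule.span ℂ Sσ ≤ VK := by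
    rw [Submodule.span_le]
    rintro s ⟨Z, hZ, rfl⟩
    exact hσVK Z hZ
  have hVK_spanInd : ∀ f ∈ VK, f ∈ Submodule.span ℂ SInd := by
    intro f hf
    set rep : Set G → G := fun k => if h : k.Nonempty then h.some else 1 with hrep
    have hfeq : f = ∑ k ∈ hKfin.toFinset, f (rep k) • indC k := by
      funext g
      obtain ⟨k₀, ⟨hk₀K, hgk₀⟩, hu⟩ := hKuniq g
      have hksum : (∑ k ∈ hKfin.toFinset, f (rep k) • indC k) g
          = ∑ k ∈ hKfin.toFinset, f (rep k) * indC k g := by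
        simp [Finset.sum_apply]
      rw [hksum, Finset.sum_eq_single k₀]
      · have hne : k₀.Nonempty := ⟨g, hgk₀⟩
        have hrk : rep k₀ ∈ k₀ := by
          rw [hrep]; simp only; rw [dif_pos hne]; exact hne.some_mem
        have hik : indC k₀ g = 1 := if_pos hgk₀
        rw [hik, mul_one]
        exact (hf k₀ hk₀K (rep k₀) hrk g hgk₀).symm
      · intro k hkt hkne
        have hkK : k ∈ K := hKfin.mem_toFinset.mp hkt
        have hgk : g ∉ k := fun hg' => hkne (hu k ⟨hkK, hg'⟩)
        have : indC k g = 0 := if_neg hgk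
        rw [this, mul_zero]
      · intro hnk; exact absurd (hKfin.mem_toFinset.mpr hk₀K) hnk
    rw [hfeq]
    exact Submodule.sum_mem _ fun k hk => Submodule.smul_mem _ _
      (Submodule.subset_span ⟨k, hKfin.mem_toFinset.mp hk, rfl⟩)
  have hIndLI : LinearIndependent ℂ ((↑) : SInd → (G → ℂ)) := by
    apply linIndep_of_sep
    rintro v ⟨k, hkK, rfl⟩
    obtain ⟨g, hgk⟩ : k.Nonempty := (hK.1 k hkK).1
    refine ⟨LinearMap.proj g, ?_, ?_⟩
    · show indC k g ≠ 0
      rw [show indC k g = 1 from if_pos hgk]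
      exact one_ne_zero
    · rintro w ⟨k', hk'K, rfl⟩ hne
      show indC k' g = 0
      have hkk' : k' ≠ k := fun h => hne (by rw [h])
      refine if_neg fun hg' => ?_
      obtain ⟨p, hp, hu⟩ := hKuniq g
      exact hkk' ((hu k' ⟨hk'K, hg'⟩).trans (hu k ⟨hkK, hgk⟩).symm)
  have hσLI : LinearIndependent ℂ ((↑) : Sσ → (G → ℂ)) := by
    apply linIndep_of_sep
    rintro v ⟨Z, hZY, rfl⟩
    obtain ⟨χ, hχZ⟩ := (hY.1 Z hZY).1
    have hχI : χ ∈ Irr G := (hY.1 Z hZY).2 hχZ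
    refine ⟨Lfun χ, ?_, ?_⟩
    · rw [Lfun_wsum (hY.1 Z hZY).2 hχI, if_pos hχZ]
      exact mul_ne_zero (Nat.cast_ne_zero.mpr Fintype.card_pos.ne') (irr_one_ne_zero hχI)
    · rintro w ⟨Z', hZ'Y, rfl⟩ hne
      rw [Lfun_wsum (hY.1 Z' hZ'Y).2 hχI]
      refine if_neg fun hχZ' => ?_
      exact hne (by rw [hYdisj hZ'Y hZY hχZ' hχZ])
  have hIndInj : Set.InjOn indC K := by
    intro k hk k' hk' he
    ext g
    constructor
    · intro hg
      by_contra hg'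
      have h := congrFun he g
      rw [show indC k g = 1 from if_pos hg, show indC k' g = 0 from if_neg hg'] at h
      exact one_ne_zero h
    · intro hg
      by_contra hg'
      have h := congrFun he g
      rw [show indC k g = 0 from if_neg hg', show indC k' g = 1 from if_pos hg] at h
      exact zero_ne_one h
  have hσInj : Set.InjOn wsum Y := by
    have hsub : ∀ Z Z', Z ∈ Y → Z' ∈ Y → wsum Z = wsum Z' → Z ⊆ Z' := by
      intro Z Z' hZ hZ' he χ hχZ
      have hχI : χ ∈ Irr G := (hY.1 Z hZ).2 hχZ
      have h1 := Lfun_wsum (hY.1 Z hZ).2 hχI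
      have h2 := Lfun_wsum (hY.1 Z' hZ').2 hχI
      rw [he] at h1
      have h3 := h1.symm.trans h2
      by_contra hχZ'
      rw [if_pos hχZ, if_neg hχZ'] at h3
      exact mul_ne_zero (Nat.cast_ne_zero.mpr Fintype.card_pos.ne')
        (irr_one_ne_zero hχI) h3
    intro Z hZ Z' hZ' he
    exact (hsub Z Z' hZ hZ' he).antisymm (hsub Z' Z hZ' hZ he.symm)
  have hSIndFin : SInd.Finite := hKfin.image _
  have hSσFin : Sσ.Finite := hYfin.image _
  letI : Fintype SInd := hSIndFin.fintype
  letI : Fintype Sσ := hSσFin.fintype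
  have hfr1 : Module.finrank ℂ (Submodule.span ℂ SInd) = K.ncard := by
    rw [finrank_span_set_eq_card hIndLI, ← Set.ncard_eq_toFinset_card',
      hSInd, Set.ncard_image_of_injOn hIndInj]
  have hfr2 : Module.finrank ℂ (Submodule.span ℂ Sσ) = Y.ncard := by
    rw [finrank_span_set_eq_card hσLI, ← Set.ncard_eq_toFinset_card',
      hSσ, Set.ncard_image_of_injOn hσInj]
  have hle : Submodule.span ℂ Sσ ≤ Submodule.span ℂ SInd :=
    fun f hf => hVK_spanInd f (hspanσ_VK hf)
  have heq : Submodule.span ℂ Sσ = Submodule.span ℂ SInd :=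
    Submodule.eq_of_le_of_finrank_le hle (by rw [hfr1, hfr2, hcard])
  have hVKle : ∀ f ∈ VK, f ∈ Submodule.span ℂ Sσ := by
    intro f hf
    rw [heq]
    exact hVK_spanInd f hf
  set S : NonUnitalSubalgebra ℂ (G → ℂ) :=
    (Submodule.span ℂ Sσ).toNonUnitalSubalgebra
      (fun x y hx hy => hVKle _ (hmulVK x (hspanσ_VK hx) y (hspanσ_VK hy))) with hS
  have hwAlg_le : ∀ a ∈ wAlg G {X}, a ∈ Submodule.span ℂ Sσ := by
    intro a ha
    have hgen : {s | ∃ X' ∈ ({X} : Set (Set (G → ℂ))), s = wsum X'} ⊆ S := by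
      rintro s ⟨X', hX', rfl⟩
      have hXX : X' = X := hX'
      subst hXX
      exact (Submodule.mem_toNonUnitalSubalgebra).mpr
        (Submodule.subset_span ⟨X', hX, rfl⟩)
    exact (Submodule.mem_toNonUnitalSubalgebra).mp (NonUnitalAlgebra.adjoin_le hgen ha)
  refine ⟨χ₀, hχ₀, ?_⟩
  ext ψ
  simp only [Set.mem_setOf_eq]
  constructor
  · intro hψX
    refine ⟨hXsub hψX, ?_⟩
    intro a ha
    have ha' := hwAlg_le a ha
    refine Submodule.span_induction
      (p := fun a _ => coeff χ₀ a = coeff ψ a) ?_ ?_ ?_ ?_ ha'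
    · rintro s ⟨Z, hZY, rfl⟩
      rw [coeff_wsum (hY.1 Z hZY).2 hχ₀, coeff_wsum (hY.1 Z hZY).2 (hXsub hψX)]
      by_cases hc : χ₀ ∈ Z
      · rw [if_pos hc, if_pos ((hYdisj hZY hX hc hχ₀X) ▸ hψX)]
      · rw [if_neg hc, if_neg fun hψZ => hc ((hYdisj hX hZY hψX hψZ) ▸ hχ₀X)]
    · show coeff χ₀ (0 : G → ℂ) = coeff ψ (0 : G → ℂ)
      rw [coeff_zero', coeff_zero']
    · intro x y hx hy ihx ihy
      show coeff χ₀ (x + y) = coeff ψ (x + y)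
      rw [coeff_add', coeff_add', ihx, ihy]
    · intro c x hx ihx
      show coeff χ₀ (c • x) = coeff ψ (c • x)
      rw [coeff_smul', coeff_smul', ihx]
  · rintro ⟨hψI, hfr⟩
    have hmem : wsum X ∈ wAlg G {X} :=
      NonUnitalAlgebra.subset_adjoin ℂ ⟨X, rfl, rfl⟩
    have h := hfr (wsum X) hmem
    rw [coeff_wsum hXsub hχ₀, if_pos hχ₀X, coeff_wsum hXsub hψI] at h
    by_contra hψX
    rw [if_neg hψX] at h
    exact one_ne_zero h
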